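/- Let F, E0 be subspaces of R^N with ||P_F P_{E0}||_op <= 2.2*eps, let x0 be in E0, e in R^N, E = F^perp ∩ (F + E0), and r = P_E x0 + P_{F^perp} e. Then ||x0 - r||_2 <= 2.2*eps*||x0||_2 + ||e||_2. -/

import Mathlib

open scoped BigOperators

noncomputable def l2 {d : ℕ} (v : Fin d → ℝ) : ℝ := Real.sqrt (∑ i, (v i)^2)

noncomputable def l1 {d : ℕ} (v : Fin d → ℝ) : ℝ := ∑ i, |v i|

noncomputable def linf {d : ℕ} (v : Fin d → ℝ) : ℝ := ⨆ i, |v i|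

noncomputable def restrict {d : ℕ} (v : Fin d → ℝ) (T : Finset (Fin d)) : Fin d → ℝ :=
  fun i => if i ∈ T then v i else 0

open Classical in
noncomputable def spt {d : ℕ} (v : Fin d → ℝ) : Finset (Fin d) :=
  Finset.univ.filter (fun i => v i ≠ 0)

def RIC {N d : ℕ} (Φ : Matrix (Fin N) (Fin d) ℝ) (m : ℕ) (ε : ℝ) : Prop :=
  ∀ z : Fin d → ℝ, (spt z).card ≤ m →
    (1 - ε) * l2 z ≤ l2 (Φ.mulVec z) ∧ l2 (Φ.mulVec z) ≤ (1 + ε) * l2 z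

noncomputable def proj {N : ℕ} (L : Submodule ℝ (EuclideanSpace ℝ (Fin N))) :
    EuclideanSpace ℝ (Fin N) →L[ℝ] EuclideanSpace ℝ (Fin N) :=
  L.subtypeL.comp (Submodule.orthogonalProjection L)

noncomputable def colSpan {N d : ℕ} (Φ : Matrix (Fin N) (Fin d) ℝ) (I : Finset (Fin d)) :
    Submodule ℝ (EuclideanSpace ℝ (Fin N)) :=
  Submodule.span ℝ ((fun j => (WithLp.toLp 2 (fun i => Φ i j) : EuclideanSpace ℝ (Fin N))) '' (I : Set (Fin d)))

set_option synthInstance.maxHeartbeats 1000000 in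
/-- Lemma 2.3 (Approximation of the residual). -/
theorem stmt13 {N : ℕ} (F E₀ : Submodule ℝ (EuclideanSpace ℝ (Fin N))) (ε : ℝ)
    (h : ‖(proj F).comp (proj E₀)‖ ≤ 2.2 * ε)
    (x₀ : EuclideanSpace ℝ (Fin N)) (hx₀ : x₀ ∈ E₀)
    (e : EuclideanSpace ℝ (Fin N))
    (r : EuclideanSpace ℝ (Fin N)) (hr : r = proj (Fᗮ ⊓ (F ⊔ E₀)) x₀ + proj Fᗮ e) :
    ‖x₀ - r‖ ≤ 2.2 * ε * ‖x₀‖ + ‖e‖ := by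
  have hproj : ∀ (L : Submodule ℝ (EuclideanSpace ℝ (Fin N))) (v : EuclideanSpace ℝ (Fin N)),
      proj L v = L.starProjection v := fun L v => rfl
  have hFx : proj F x₀ ∈ F := (Submodule.orthogonalProjection F x₀).2
  have key : proj (Fᗮ ⊓ (F ⊔ E₀)) x₀ = x₀ - proj F x₀ := by
    rw [hproj]
    apply Submodule.eq_starProjection_of_mem_orthogonal
    · refine Submodule.mem_inf.2 ⟨Submodule.sub_starProjection_mem_orthogonal (K := F) x₀, ?_⟩
      exact Submodule.sub_mem _ (Submodule.mem_sup_right hx₀) (Submodule.mem_sup_left hFx)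
    · have h1 : (Fᗮ ⊓ (F ⊔ E₀)) ≤ Fᗮ := inf_le_left
      have h2 : Fᗮᗮ ≤ (Fᗮ ⊓ (F ⊔ E₀))ᗮ := Submodule.orthogonal_le h1
      have : x₀ - (x₀ - proj F x₀) = proj F x₀ := by abel
      rw [this]
      exact h2 (Submodule.le_orthogonal_orthogonal F hFx)
  have hx0r : x₀ - r = proj F x₀ - proj Fᗮ e := by rw [hr, key]; abel
  have h1 : ‖proj F x₀‖ ≤ 2.2 * ε * ‖x₀‖ := by
    have he : proj E₀ x₀ = x₀ := by
      rw [hproj, Submodule.starProjection_eq_self_iff.2 hx₀]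
    calc ‖proj F x₀‖ = ‖((proj F).comp (proj E₀)) x₀‖ := by
          rw [ContinuousLinearMap.comp_apply, he]
      _ ≤ ‖(proj F).comp (proj E₀)‖ * ‖x₀‖ := ContinuousLinearMap.le_opNorm _ _
      _ ≤ 2.2 * ε * ‖x₀‖ := by
          apply mul_le_mul_of_nonneg_right h (norm_nonneg _)
  have h2 : ‖proj Fᗮ e‖ ≤ ‖e‖ := by
    calc ‖proj Fᗮ e‖ ≤ ‖proj Fᗮ‖ * ‖e‖ := ContinuousLinearMap.le_opNorm _ _
      _ ≤ 1 * ‖e‖ := by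
          apply mul_le_mul_of_nonneg_right _ (norm_nonneg _)
          refine (ContinuousLinearMap.opNorm_comp_le _ _).trans ?_
          calc ‖(Fᗮ).subtypeL‖ * ‖Submodule.orthogonalProjection Fᗮ‖ ≤ 1 * 1 :=
                mul_le_mul (Fᗮ).norm_subtypeL_le (Submodule.orthogonalProjectionOnto_norm_le _)
                  (ContinuousLinearMap.opNorm_nonneg _) zero_le_one
            _ = 1 := one_mul 1
      _ = ‖e‖ := one_mul _
  rw [hx0r]
  exact (norm_sub_le _ _).trans (add_le_add h1 h2)
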